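/- Let ⁰a = (a₀; a₁, a₂) be a scator with a₀ ≠ 0, a₁ ≠ 0, a₂ ≠ 0 and ‖⁰a‖² ≠ 0. Then the dual of ⁰a multiplied (in the scator product) by the inverse of ⁰a is the zero scator: (bar ⁰a)(⁰a)⁻¹ = (0; 0, 0), where (⁰a)⁻¹ = (1/‖⁰a‖²) · ⁰a*. In particular the scator algebra has zero divisors. -/

import Mathlib

/-- A (1+2)-dimensional scator: scalar component `s` and director components `x`, `y`. -/
structure Scator where
  s : ℝ
  x : ℝ
  y : ℝ

namespace Scator

/-- Componentwise addition of scators. -/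
noncomputable def add (a b : Scator) : Scator := ⟨a.s + b.s, a.x + b.x, a.y + b.y⟩

/-- Componentwise subtraction of scators. -/
noncomputable def sub (a b : Scator) : Scator := ⟨a.s - b.s, a.x - b.x, a.y - b.y⟩

/-- Componentwise multiplication of a scator by a real scalar. -/
noncomputable def smul (l : ℝ) (a : Scator) : Scator := ⟨l * a.s, l * a.x, l * a.y⟩

/-- The scator product. -/
noncomputable def mul (a b : Scator) : Scator :=
  ⟨a.s * b.s + a.x * b.x + a.y * b.y + a.x * a.y * b.x * b.y / (a.s * b.s),
   a.s * b.x + a.x * b.s + a.x * a.y * b.y / a.s + a.y * b.x * b.y / b.s,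
   a.s * b.y + a.y * b.s + a.x * a.y * b.x / a.s + a.x * b.x * b.y / b.s⟩

/-- Hypercomplex conjugate. -/
noncomputable def conj (a : Scator) : Scator := ⟨a.s, -a.x, -a.y⟩

/-- Ordinary dual scator. -/
noncomputable def bar (a : Scator) : Scator := ⟨a.x * a.y / a.s, a.y, a.x⟩

/-- Internal dual scator. -/
noncomputable def barI (a : Scator) : Scator := ⟨a.x, a.s, a.x * a.y / a.s⟩

/-- External dual scator. -/
noncomputable def barE (a : Scator) : Scator := ⟨a.y, a.x * a.y / a.s, a.s⟩

/-- Modulus squared of a scator. -/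
noncomputable def norm2 (a : Scator) : ℝ := a.s ^ 2 - a.x ^ 2 - a.y ^ 2 + a.x ^ 2 * a.y ^ 2 / a.s ^ 2

/-- Inverse of a scator with respect to the scator product. -/
noncomputable def inv (a : Scator) : Scator := smul (1 / norm2 a) (conj a)

end Scator

theorem bar_mul_inv_zero (a : Scator) (h0 : a.s ≠ 0) (h1 : a.x ≠ 0) (h2 : a.y ≠ 0)
    (hn : Scator.norm2 a ≠ 0) :
    Scator.mul (Scator.bar a) (Scator.inv a) = (⟨0, 0, 0⟩ : Scator) ∧
    Scator.bar a ≠ (⟨0, 0, 0⟩ : Scator) ∧ Scator.inv a ≠ (⟨0, 0, 0⟩ : Scator) := by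
  refine ⟨?_, ?_, ?_⟩
  · simp only [Scator.mul, Scator.bar, Scator.inv, Scator.smul, Scator.conj, Scator.mk.injEq]
    refine ⟨?_, ?_, ?_⟩ <;> field_simp <;> ring
  · intro h
    have h' : a.y = 0 := congrArg Scator.x h
    exact h2 h'
  · intro h
    have h' : 1 / Scator.norm2 a * a.s = 0 := congrArg Scator.s h
    rcases mul_eq_zero.mp h' with h'' | h''
    · exact hn (by field_simp at h''; simp at h'')
    · exact h0 h''
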